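/- Let H be a simple finite-dimensional real Lie algebra of compact type. Then H has no solvable Lie subalgebra of codimension 1; that is, every Lie subalgebra B ≤ H with dim B = dim H − 1 fails to be solvable. -/

import Mathlib

/-- A simple finite-dimensional real Lie algebra of compact type (negative definite Killing
form) has no solvable Lie subalgebra of codimension 1. -/
theorem stmt3 (H : Type*) [LieRing H] [LieAlgebra ℝ H] [FiniteDimensional ℝ H]
    (hsimple : LieAlgebra.IsSimple ℝ H)
    (hcompact : ∀ x : H, x ≠ 0 → killingForm ℝ H x x < 0)
    (B : LieSubalgebra ℝ H)
    (hdim : Module.finrank ℝ B = Module.finrank ℝ H - 1) :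
    ¬ LieAlgebra.IsSolvable B := by
  intro _
  set κ := killingForm ℝ H with hκ
  have hsymm : ∀ a b : H, κ a b = κ b a := LieModule.traceForm_comm ℝ H H
  have hrefl : κ.IsRefl := fun a b h => by rw [hsymm]; exact h
  have hnd : κ.Nondegenerate := by
    refine (LinearMap.IsRefl.nondegenerate_iff_separatingLeft hrefl).mpr fun a ha => ?_
    by_contra h
    exact absurd (ha a) (ne_of_lt (hcompact a h))
  have hnt : Nontrivial H := by
    rcases subsingleton_or_nontrivial H with h | h
    · exact absurd ⟨fun a b => Subsingleton.elim _ _⟩ hsimple.non_abelian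
    · exact h
  have hpos : 0 < Module.finrank ℝ H := Module.finrank_pos
  set K := κ.orthogonal B.toSubmodule with hK
  have hBrank : Module.finrank ℝ B.toSubmodule = Module.finrank ℝ H - 1 := hdim
  have hKrank : Module.finrank ℝ K = 1 := by
    have h1 : Module.finrank ℝ K = Module.finrank ℝ H - Module.finrank ℝ B.toSubmodule :=
      LinearMap.BilinForm.finrank_orthogonal hnd _
    rw [h1, hBrank]
    omega
  obtain ⟨x, hxK, hx0⟩ : ∃ x ∈ K, x ≠ 0 := by
    have : Nontrivial K := Module.nontrivial_of_finrank_pos (R := ℝ) (M := K) (by omega)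
    obtain ⟨⟨y, hy⟩, hne⟩ := exists_ne (0 : K)
    exact ⟨y, hy, by simpa [Subtype.ext_iff] using hne⟩
  have hspan : Submodule.span ℝ {x} = K := by
    apply Submodule.eq_of_le_of_finrank_le (Submodule.span_le.mpr (by simpa using hxK))
    rw [finrank_span_singleton hx0, hKrank]
  -- brackets of elements of B with x vanish
  have hbx : ∀ b ∈ B, ⁅b, x⁆ = 0 := by
    intro b hb
    have hmem : ⁅b, x⁆ ∈ K := by
      intro b' hb'
      have h1 : κ ⁅b', b⁆ x = 0 := hxK ⁅b', b⁆ (B.lie_mem hb' hb)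
      have h2 := LieModule.traceForm_apply_lie_apply ℝ H H b' b x
      simpa [← hκ, h1] using h2.symm
    obtain ⟨c, hc⟩ : ∃ c : ℝ, ⁅b, x⁆ = c • x := by
      have := hspan ▸ hmem
      rw [Submodule.mem_span_singleton] at this
      obtain ⟨c, hc⟩ := this
      exact ⟨c, hc.symm⟩
    have h0 : κ ⁅b, x⁆ x = 0 := by
      rw [hκ, LieModule.traceForm_apply_lie_apply]
      simp
    rw [hc] at h0
    have hxx : κ x x ≠ 0 := ne_of_lt (hcompact x hx0)
    have : c = 0 := by
      have : c * κ x x = 0 := by simpa using h0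
      rcases mul_eq_zero.mp this with h | h
      · exact h
      · exact absurd h hxx
    rw [hc, this, zero_smul]
  -- x is central
  have hcentral : ∀ h : H, ⁅x, h⁆ = 0 := by
    have hcompl : IsCompl B.toSubmodule K :=
      LinearMap.BilinForm.isCompl_orthogonal_of_restrict_nondegenerate hrefl
        (by
          refine (LinearMap.IsRefl.nondegenerate_iff_separatingLeft (B := κ.restrict B.toSubmodule) (fun a b h => hrefl a b h)).mpr fun ⟨b, hb⟩ hball => ?_
          have hb0 : κ b b = 0 := hball ⟨b, hb⟩
          ext
          by_contra h
          exact absurd hb0 (ne_of_lt (hcompact b h)))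
    intro h
    have : h ∈ B.toSubmodule ⊔ K := by rw [hcompl.sup_eq_top]; trivial
    obtain ⟨b, hb, k, hk, rfl⟩ := Submodule.mem_sup.mp this
    obtain ⟨c, hc⟩ : ∃ c : ℝ, k = c • x := by
      have := hspan ▸ hk
      rw [Submodule.mem_span_singleton] at this
      obtain ⟨c, hc⟩ := this
      exact ⟨c, hc.symm⟩
    have hxb : ⁅x, b⁆ = 0 := by
      rw [← lie_skew, hbx b hb, neg_zero]
    rw [lie_add, hxb, hc, lie_smul, lie_self, smul_zero, add_zero]
  -- hence ad x = 0 and κ x x = 0, contradiction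
  have had : LieAlgebra.ad ℝ H x = 0 := by
    ext h
    simpa using hcentral h
  have : κ x x = 0 := by
    rw [hκ, killingForm_apply_apply, had]
    simp
  exact absurd this (ne_of_lt (hcompact x hx0))
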